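/- Let $n_1, n_2$ be positive integers, $r \geq 0$, and $j \geq 1$. With $S(n_1, n_2; r, j, q) = \frac{1}{[n_1]}\binom{n_1+n_2}{n_1}_q^{-1} \sum_{k=1}^{n_1} [2k][k]^{2r} q^{jk^2-(r+1)k}\binom{n_1+n_2}{n_1+k}_q \binom{n_1+n_2}{n_2+k}_q$ and $S(l; r, j', q) = \frac{1}{[l]}\binom{2l}{l}_q^{-1}\sum_{k=1}^{l}[2k][k]^{2r}q^{j'k^2-(r+1)k}\binom{2l}{l+k}_q$, there holds $S(n_1, n_2; r, j, q) = \sum_{l=1}^{n_1} q^{l^2} \binom{n_1-1}{l-1}_q \binom{n_2}{l}_q \, S(l; r, j-1, q)$ in $\mathbb{Q}(q)$. -/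

import Mathlib

open Polynomial Finset

/-- The `q`-integer `[n] = 1 + q + ⋯ + q^(n-1)` as a polynomial in `ℤ[q]`. -/
noncomputable def qint (n : ℕ) : Polynomial ℤ := ∑ i ∈ Finset.range n, Polynomial.X ^ i

/-- The Gaussian binomial coefficient `[n choose k]_q` in `ℤ[q]`, via the `q`-Pascal rule. -/
noncomputable def qbinom : ℕ → ℕ → Polynomial ℤ
  | _, 0 => 1
  | 0, _ + 1 => 0
  | n + 1, k + 1 => qbinom n k + Polynomial.X ^ (k + 1) * qbinom n (k + 1)

/-- `S(n₁,…,n_m; r, j, q)` of the paper, evaluated at `q ∈ ℚ(q)`.  The sequence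
`n₁, …, n_m, n_{m+1}` is encoded as `n : ℕ → ℕ` (with the cyclic condition
`n (m+1) = n 1` imposed as a hypothesis in the theorems). -/
noncomputable def Sfun (q : RatFunc ℚ) (m : ℕ) (n : ℕ → ℕ) (r j : ℕ) : RatFunc ℚ :=
  (Polynomial.aeval q (qint (n 1)))⁻¹ * (Polynomial.aeval q (qbinom (n 1 + n m) (n 1)))⁻¹ *
    ∑ k ∈ Finset.Icc 1 (n 1),
      Polynomial.aeval q (qint (2 * k)) * (Polynomial.aeval q (qint k)) ^ (2 * r) *
        q ^ ((j : ℤ) * (k : ℤ) ^ 2 - ((r : ℤ) + 1) * (k : ℤ)) *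
        ∏ i ∈ Finset.Icc 1 m, Polynomial.aeval q (qbinom (n i + n (i + 1)) (n i + k))

noncomputable def qfact : ℕ → Polynomial ℤ
  | 0 => 1
  | n + 1 => qfact n * qint (n + 1)

lemma qbinom_zero (n : ℕ) : qbinom n 0 = 1 := by cases n <;> rfl

lemma qbinom_succ (n k : ℕ) :
    qbinom (n+1) (k+1) = qbinom n k + Polynomial.X ^ (k + 1) * qbinom n (k + 1) := rfl

lemma qbinom_eq_zero_of_lt : ∀ {n k : ℕ}, n < k → qbinom n k = 0
  | 0, k+1, _ => rfl
  | n+1, k+1, h => by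
      rw [qbinom_succ, qbinom_eq_zero_of_lt (by omega), qbinom_eq_zero_of_lt (by omega)]
      ring

lemma qint_eval_one (n : ℕ) : (qint n).eval 1 = n := by
  simp [qint]

lemma qfact_eval_one (n : ℕ) : (qfact n).eval 1 = (n.factorial : ℤ) := by
  induction n with
  | zero => simp [qfact]
  | succ n ih => simp [qfact, ih, qint_eval_one, Nat.factorial_succ]; ring

lemma qbinom_eval_one (n k : ℕ) : (qbinom n k).eval 1 = (n.choose k : ℤ) := by
  induction n generalizing k with
  | zero => cases k <;> simp [qbinom]
  | succ n ih =>
      cases k with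
      | zero => simp [qbinom_zero]
      | succ k => simp [qbinom_succ, ih, Nat.choose_succ_succ]

lemma qint_ne_zero {n : ℕ} (h : 0 < n) : qint n ≠ 0 := by
  intro hc
  have := qint_eval_one n
  rw [hc] at this
  simp at this
  omega

lemma qfact_ne_zero (n : ℕ) : qfact n ≠ 0 := by
  intro hc
  have := qfact_eval_one n
  rw [hc] at this
  simp at this
  exact (Nat.factorial_pos n).ne' (by exact_mod_cast this.symm)

lemma qbinom_ne_zero {n k : ℕ} (h : k ≤ n) : qbinom n k ≠ 0 := by
  intro hc
  have := qbinom_eval_one n k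
  rw [hc] at this
  simp at this
  exact (Nat.choose_pos h).ne' (by exact_mod_cast this.symm)

lemma qint_add (a b : ℕ) : qint (a + b) = qint a + Polynomial.X ^ a * qint b := by
  simp only [qint, Finset.mul_sum, ← pow_add]
  rw [Finset.sum_range_add]

lemma qbinom_mul_qfact : ∀ {n k : ℕ}, k ≤ n →
    qbinom n k * (qfact k * qfact (n - k)) = qfact n := by
  intro n
  induction n with
  | zero => intro k hk; interval_cases k; simp [qbinom_zero, qfact]
  | succ n ih =>
      intro k hk
      cases k with
      | zero => simp [qbinom_zero, qfact]
      | succ k =>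
          have hk' : k ≤ n := by omega
          rw [qbinom_succ, add_mul]
          rcases eq_or_lt_of_le hk' with h | h
          · subst h
            rw [qbinom_eq_zero_of_lt (Nat.lt_succ_self k)]
            have hb : qbinom k k * qfact k = qfact k := by
              have := ih (le_refl k); rw [Nat.sub_self] at this
              simpa [qfact] using this
            have e0 : qfact 0 = 1 := rfl
            simp only [Nat.sub_self, mul_zero, zero_mul, add_zero, e0, mul_one]
            show qbinom k k * (qfact k * qint (k + 1)) = qfact k * qint (k + 1)
            rw [← mul_assoc, hb]
          · -- k + 1 ≤ n
            have h1 : qbinom n k * (qfact (k+1) * qfact (n + 1 - (k+1))) =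
                qint (k+1) * qfact n := by
              have e1 : n + 1 - (k + 1) = n - k := by omega
              have : qfact (k+1) = qfact k * qint (k+1) := rfl
              rw [e1, this, ← ih hk']
              ring
            have h2 : Polynomial.X ^ (k+1) * qbinom n (k+1) *
                (qfact (k+1) * qfact (n + 1 - (k+1))) =
                Polynomial.X ^ (k+1) * qint (n - k) * qfact n := by
              have e1 : n + 1 - (k + 1) = (n - (k+1)) + 1 := by omega
              have e2 : qfact ((n - (k+1)) + 1) = qfact (n - (k+1)) * qint (n - k) := by
                have : n - (k+1) + 1 = n - k := by omega
                rw [qfact, this]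
              rw [e1, e2, ← ih (by omega : k + 1 ≤ n)]
              ring
            rw [h1, h2]
            have : qint (k + 1) + Polynomial.X ^ (k+1) * qint (n - k) = qint (n+1) := by
              rw [← qint_add]; congr 1; omega
            calc qint (k+1) * qfact n + Polynomial.X ^ (k+1) * qint (n-k) * qfact n
                = (qint (k + 1) + Polynomial.X ^ (k+1) * qint (n - k)) * qfact n := by ring
              _ = qint (n+1) * qfact n := by rw [this]
              _ = qfact (n+1) := by rw [qfact]; ring

lemma qvandermonde (n : ℕ) : ∀ (m p : ℕ), qbinom (m+n) p =
    ∑ j ∈ Finset.range (p+1),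
      Polynomial.X ^ ((m-j)*(p-j)) * qbinom m j * qbinom n (p-j) := by
  intro m
  induction m with
  | zero =>
      intro p
      rw [Finset.sum_eq_single_of_mem 0 (by simp)]
      · simp [qbinom_zero]
      · intro j _ hj0
        obtain ⟨i, rfl⟩ := Nat.exists_eq_succ_of_ne_zero hj0
        simp [qbinom_eq_zero_of_lt (Nat.succ_pos i)]
  | succ m ih =>
      intro p
      cases p with
      | zero => simp [qbinom_zero]
      | succ p =>
          rw [show m+1+n = (m+n)+1 from by omega, qbinom_succ, ih p, ih (p+1)]
          rw [Finset.sum_range_succ'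
            (fun j => Polynomial.X ^ ((m+1-j)*(p+1-j)) * qbinom (m+1) j * qbinom n (p+1-j)) (p+1)]
          have expand : ∀ i ∈ Finset.range (p+1),
              Polynomial.X ^ ((m+1-(i+1))*(p+1-(i+1))) * qbinom (m+1) (i+1) * qbinom n (p+1-(i+1))
              = (Polynomial.X ^ ((m-i)*(p-i)) * qbinom m i * qbinom n (p-i))
                + Polynomial.X ^ ((m-(i+1))*(p+1-(i+1)) + (p+1)) * qbinom m (i+1) * qbinom n (p-i) := by
            intro i hi
            rw [Finset.mem_range] at hi
            rw [qbinom_succ]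
            have e1 : m + 1 - (i+1) = m - i := by omega
            have e2 : p + 1 - (i+1) = p - i := by omega
            rw [e1, e2, mul_add, add_mul]
            congr 1
            rcases le_or_gt (i+1) m with h | h
            · have e5 : (m-i)*(p-i) + (i+1) = (m-(i+1))*(p-i) + (p+1) := by
                have e3 : m - i = (m - (i+1)) + 1 := by omega
                rw [e3, add_mul, one_mul, add_assoc]
                congr 1
                omega
              rw [← e5, pow_add]
              ring
            · rw [qbinom_eq_zero_of_lt h]
              ring
          rw [Finset.sum_congr rfl expand, Finset.sum_add_distrib]
          have grhs : (∑ i ∈ Finset.range (p+1),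
              Polynomial.X ^ ((m-(i+1))*(p+1-(i+1)) + (p+1)) * qbinom m (i+1) * qbinom n (p-i))
              + Polynomial.X ^ ((m+1-0)*(p+1-0)) * qbinom (m+1) 0 * qbinom n (p+1-0)
              = Polynomial.X ^ (p+1) * ∑ j ∈ Finset.range (p+1+1),
                  Polynomial.X ^ ((m-j)*(p+1-j)) * qbinom m j * qbinom n (p+1-j) := by
            rw [Finset.mul_sum]
            rw [Finset.sum_range_succ'
              (fun j => Polynomial.X ^ (p+1) *
                (Polynomial.X ^ ((m-j)*(p+1-j)) * qbinom m j * qbinom n (p+1-j))) (p+1)]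
            congr 1
            · apply Finset.sum_congr rfl
              intro i _
              have e2 : p + 1 - (i+1) = p - i := by omega
              rw [e2, pow_add]
              ring
            · simp only [Nat.sub_zero, qbinom_zero, mul_one]
              rw [show (m+1)*(p+1) = (p+1) + m*(p+1) from by ring, pow_add]
              ring
          rw [← grhs]
          ring

lemma qvandermonde' (m n p : ℕ) (h : p ≤ n) : qbinom (m+n) p =
    ∑ j ∈ Finset.range (p+1),
      Polynomial.X ^ (j*(n-p+j)) * qbinom m j * qbinom n (p-j) := by
  rw [show m+n = n+m from by ring, qvandermonde m n p]
  rw [← Finset.sum_range_reflect]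
  apply Finset.sum_congr rfl
  intro j hj
  rw [Finset.mem_range] at hj
  have e1 : p + 1 - 1 - j = p - j := by omega
  have e2 : p - (p - j) = j := by omega
  have e3 : n - (p - j) = n - p + j := by omega
  rw [e1, e2, e3]
  ring

noncomputable def QQ (p : Polynomial ℤ) : RatFunc ℚ := Polynomial.aeval RatFunc.X p

lemma QQ_eq (p : Polynomial ℤ) :
    QQ p = algebraMap (Polynomial ℚ) (RatFunc ℚ) (p.map (Int.castRingHom ℚ)) := by
  induction p using Polynomial.induction_on with
  | C a => simp [QQ]
  | add p q hp hq => simp only [QQ, map_add, Polynomial.map_add] at *; rw [hp, hq]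
  | monomial a i h =>
      simp only [QQ, map_mul, map_pow, Polynomial.map_mul, Polynomial.map_pow,
        Polynomial.map_C, Polynomial.map_X, Polynomial.aeval_C, Polynomial.aeval_X] at *
      rw [pow_succ, ← mul_assoc, h, RatFunc.algebraMap_X, pow_succ, mul_assoc]

lemma QQ_ne_zero {p : Polynomial ℤ} (h : p ≠ 0) : QQ p ≠ 0 := by
  rw [QQ_eq]
  intro hc
  apply h
  have h1 := RatFunc.algebraMap_injective ℚ
  have h2 : p.map (Int.castRingHom ℚ) = 0 := by
    apply h1
    simpa using hc
  have hinj : Function.Injective (Int.castRingHom ℚ) := Int.cast_injective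
  exact (Polynomial.map_eq_zero_iff hinj).mp h2

lemma QQ_fact_ne (n : ℕ) : QQ (qfact n) ≠ 0 := QQ_ne_zero (qfact_ne_zero n)

lemma QQ_int_ne {n : ℕ} (h : 0 < n) : QQ (qint n) ≠ 0 := QQ_ne_zero (qint_ne_zero h)

lemma QQ_qbinom_eq {n k : ℕ} (h : k ≤ n) :
    QQ (qbinom n k) = QQ (qfact n) / (QQ (qfact k) * QQ (qfact (n-k))) := by
  rw [eq_div_iff (mul_ne_zero (QQ_fact_ne k) (QQ_fact_ne (n-k)))]
  simp only [QQ, ← map_mul]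
  rw [qbinom_mul_qfact h]

lemma QQ_qbinom_zero {n k : ℕ} (h : n < k) : QQ (qbinom n k) = 0 := by
  rw [qbinom_eq_zero_of_lt h]; simp [QQ]

lemma qfact_pred {l : ℕ} (h : 0 < l) : qfact l = qfact (l-1) * qint l := by
  obtain ⟨m, rfl⟩ := Nat.exists_eq_succ_of_ne_zero h.ne'
  rfl

lemma QQ_qint_eq {l : ℕ} (h : 0 < l) :
    QQ (qint l) = QQ (qfact l) / QQ (qfact (l-1)) := by
  rw [eq_div_iff (QQ_fact_ne (l-1))]
  simp only [QQ, ← map_mul]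
  congr 1
  rw [mul_comm, ← qfact_pred h]

lemma termwise (a b k l : ℕ) (hk : 1 ≤ k) (hkl : k ≤ l) (hla : l ≤ a) (hlb : l ≤ b) :
    RatFunc.X ^ (l^2) * QQ (qbinom (a-1) (l-1)) * QQ (qbinom b l) * (QQ (qint l))⁻¹ *
      (QQ (qbinom (l+l) l))⁻¹ * QQ (qbinom (l+l) (l+k))
    = ((QQ (qint a))⁻¹ * (QQ (qbinom (a+b) a))⁻¹ * RatFunc.X ^ (k^2) *
        QQ (qbinom (a+b) (b+k))) *
      (RatFunc.X ^ ((l-k)*(2*k+(l-k))) * QQ (qbinom (a-k) (l-k)) *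
        QQ (qbinom (b+k) (b-k-(l-k)))) := by
  have ha : 1 ≤ a := le_trans (hk.trans hkl) hla
  rw [QQ_qbinom_eq (show l-1 ≤ a-1 by omega), QQ_qbinom_eq hlb,
    QQ_qbinom_eq (show l ≤ l+l by omega), QQ_qbinom_eq (show l+k ≤ l+l by omega),
    QQ_qbinom_eq (show a ≤ a+b by omega), QQ_qbinom_eq (show b+k ≤ a+b by omega),
    QQ_qbinom_eq (show l-k ≤ a-k by omega), QQ_qbinom_eq (show b-k-(l-k) ≤ b+k by omega),
    QQ_qint_eq (show 0 < l by omega), QQ_qint_eq (show 0 < a by omega)]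
  rw [show a-1-(l-1) = a-l from by omega, show l+l-l = l from by omega,
    show l+l-(l+k) = l-k from by omega, show a+b-a = b from by omega,
    show a+b-(b+k) = a-k from by omega, show a-k-(l-k) = a-l from by omega,
    show b-k-(l-k) = b-l from by omega, show b+k-(b-l) = l+k from by omega]
  have hp : l^2 = k^2 + (l-k)*(2*k+(l-k)) := by
    obtain ⟨j, rfl⟩ : ∃ j, l = k + j := ⟨l-k, by omega⟩
    rw [Nat.add_sub_cancel_left]
    ring
  rw [hp, pow_add]
  have h1 := QQ_fact_ne (a-1); have h2 := QQ_fact_ne (l-1); have h3 := QQ_fact_ne (a-l)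
  have h4 := QQ_fact_ne b; have h5 := QQ_fact_ne l; have h6 := QQ_fact_ne (b-l)
  have h7 := QQ_fact_ne (l+l); have h8 := QQ_fact_ne (l+k); have h9 := QQ_fact_ne (l-k)
  have h10 := QQ_fact_ne (a+b); have h11 := QQ_fact_ne a; have h12 := QQ_fact_ne (b+k)
  have h13 := QQ_fact_ne (a-k)
  have hil := QQ_int_ne (show 0 < l by omega)
  have hia := QQ_int_ne (show 0 < a by omega)
  have hfl : QQ (qfact l) = QQ (qfact (l-1)) * QQ (qint l) := by
    simp only [QQ, ← map_mul]; rw [← qfact_pred (by omega)]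
  have hfa : QQ (qfact a) = QQ (qfact (a-1)) * QQ (qint a) := by
    simp only [QQ, ← map_mul]; rw [← qfact_pred (by omega)]
  have h7' := QQ_fact_ne (l*2)
  have h8' := QQ_fact_ne (k+l)
  have h12' := QQ_fact_ne (k+b)
  rw [hfl, hfa]
  field_simp

lemma QQ_binom_symm (a b k : ℕ) (hka : k ≤ a) (hkb : k ≤ b) :
    QQ (qbinom (a+b) (a+k)) = QQ (qbinom (a+b) (b-k)) := by
  rw [QQ_qbinom_eq (by omega), QQ_qbinom_eq (by omega),
    show a+b-(a+k) = b-k from by omega, show a+b-(b-k) = a+k from by omega]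
  ring

lemma hvdm (a b k : ℕ) (hka : k ≤ a) (hkb : k ≤ b) :
    ∑ j ∈ Finset.range (b-k+1), RatFunc.X ^ (j*(2*k+j)) * QQ (qbinom (a-k) j) *
      QQ (qbinom (b+k) (b-k-j)) = QQ (qbinom (a+b) (b-k)) := by
  have h := qvandermonde' (a-k) (b+k) (b-k) (by omega)
  rw [show a-k+(b+k) = a+b from by omega] at h
  have h2 := congrArg QQ h
  simp only [QQ, map_sum, map_mul, map_pow, Polynomial.aeval_X] at h2
  simp only [QQ]
  rw [h2]
  apply Finset.sum_congr rfl
  intro jj _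
  rw [show b+k-(b-k)+jj = 2*k+jj from by omega]

lemma perk (a b k : ℕ) (hk1 : 1 ≤ k) (hka : k ≤ a) :
    ∑ l ∈ Finset.Icc 1 a, (RatFunc.X ^ (l^2) * QQ (qbinom (a-1) (l-1)) * QQ (qbinom b l) *
        (QQ (qint l))⁻¹ * (QQ (qbinom (l+l) l))⁻¹ * QQ (qbinom (l+l) (l+k)))
      = (QQ (qint a))⁻¹ * (QQ (qbinom (a+b) a))⁻¹ * RatFunc.X ^ (k^2) *
        QQ (qbinom (a+b) (a+k)) * QQ (qbinom (a+b) (b+k)) := by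
  rcases le_or_gt k b with hkb | hkb
  · have hstep1 : ∑ l ∈ Finset.Icc 1 a, (RatFunc.X ^ (l^2) * QQ (qbinom (a-1) (l-1)) *
        QQ (qbinom b l) * (QQ (qint l))⁻¹ * (QQ (qbinom (l+l) l))⁻¹ *
        QQ (qbinom (l+l) (l+k)))
        = ∑ l ∈ Finset.Icc k (min a b), (RatFunc.X ^ (l^2) * QQ (qbinom (a-1) (l-1)) *
          QQ (qbinom b l) * (QQ (qint l))⁻¹ * (QQ (qbinom (l+l) l))⁻¹ *
          QQ (qbinom (l+l) (l+k))) := by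
      symm
      apply Finset.sum_subset
      · intro l hl
        rw [Finset.mem_Icc] at *
        omega
      · intro l hl hl2
        rw [Finset.mem_Icc] at hl
        rw [Finset.mem_Icc] at hl2
        rcases lt_or_ge l k with h | h
        · rw [QQ_qbinom_zero (show l+l < l+k by omega)]
          ring
        · rw [QQ_qbinom_zero (show b < l by omega)]
          ring
    rw [hstep1, ← Finset.Ico_add_one_right_eq_Icc, Finset.sum_Ico_eq_sum_range]
    have hterm : ∀ i ∈ Finset.range (min a b + 1 - k),
        RatFunc.X ^ ((k+i)^2) * QQ (qbinom (a-1) (k+i-1)) * QQ (qbinom b (k+i)) *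
          (QQ (qint (k+i)))⁻¹ * (QQ (qbinom ((k+i)+(k+i)) (k+i)))⁻¹ *
          QQ (qbinom ((k+i)+(k+i)) ((k+i)+k))
        = ((QQ (qint a))⁻¹ * (QQ (qbinom (a+b) a))⁻¹ * RatFunc.X ^ (k^2) *
            QQ (qbinom (a+b) (b+k))) *
          (RatFunc.X ^ (i*(2*k+i)) * QQ (qbinom (a-k) i) * QQ (qbinom (b+k) (b-k-i))) := by
      intro i hi
      rw [Finset.mem_range] at hi
      have h := termwise a b k (k+i) hk1 (by omega) (by omega) (by omega)
      rw [Nat.add_sub_cancel_left] at h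
      exact h
    rw [Finset.sum_congr rfl hterm, ← Finset.mul_sum]
    have hext : ∑ i ∈ Finset.range (min a b + 1 - k),
        (RatFunc.X ^ (i*(2*k+i)) * QQ (qbinom (a-k) i) * QQ (qbinom (b+k) (b-k-i)))
        = ∑ i ∈ Finset.range (b-k+1),
          (RatFunc.X ^ (i*(2*k+i)) * QQ (qbinom (a-k) i) * QQ (qbinom (b+k) (b-k-i))) := by
      apply Finset.sum_subset
      · intro i hi
        rw [Finset.mem_range] at *
        omega
      · intro i hi1 hi2
        rw [Finset.mem_range] at hi1 hi2
        rw [QQ_qbinom_zero (show a-k < i by omega)]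
        ring
    rw [hext, hvdm a b k hka hkb, ← QQ_binom_symm a b k hka hkb]
    ring
  · rw [QQ_qbinom_zero (show a+b < a+k by omega)]
    rw [Finset.sum_eq_zero]
    · ring
    · intro l hl
      rw [Finset.mem_Icc] at hl
      rcases lt_or_ge l k with h | h
      · rw [QQ_qbinom_zero (show l+l < l+k by omega)]
        ring
      · rw [QQ_qbinom_zero (show b < l by omega)]
        ring

lemma QQ_def (p : Polynomial ℤ) : Polynomial.aeval (RatFunc.X : RatFunc ℚ) p = QQ p := rfl

lemma Sfun_one (l r j' : ℕ) : Sfun RatFunc.X 1 (fun _ => l) r j' =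
    (QQ (qint l))⁻¹ * (QQ (qbinom (l+l) l))⁻¹ * ∑ k ∈ Finset.Icc 1 l,
      QQ (qint (2*k)) * QQ (qint k)^(2*r) *
        RatFunc.X ^ ((j':ℤ)*(k:ℤ)^2 - ((r:ℤ)+1)*(k:ℤ)) * QQ (qbinom (l+l) (l+k)) := by
  rw [Sfun]
  simp only [QQ_def]
  congr 1
  apply Finset.sum_congr rfl
  intro k _
  rw [Finset.Icc_self, Finset.prod_singleton]

lemma Sfun_two (a b r j : ℕ) : Sfun RatFunc.X 2 (fun i => if i = 2 then b else a) r j =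
    (QQ (qint a))⁻¹ * (QQ (qbinom (a+b) a))⁻¹ * ∑ k ∈ Finset.Icc 1 a,
      QQ (qint (2*k)) * QQ (qint k)^(2*r) *
        RatFunc.X ^ ((j:ℤ)*(k:ℤ)^2 - ((r:ℤ)+1)*(k:ℤ)) *
        (QQ (qbinom (a+b) (a+k)) * QQ (qbinom (a+b) (b+k))) := by
  rw [Sfun]
  simp only [QQ_def, reduceIte]
  congr 1
  apply Finset.sum_congr rfl
  intro k _
  rw [show Finset.Icc 1 2 = {1, 2} from rfl, Finset.prod_insert (by decide),
    Finset.prod_singleton]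
  simp only [show (if (1:ℕ) = 2 then b else a) = a from rfl,
    show (if (2:ℕ) = 2 then b else a) = b from rfl,
    show (if (2+1:ℕ) = 2 then b else a) = a from rfl,
    show (if (1+1:ℕ) = 2 then b else a) = b from rfl, if_true]
  rw [show b + a = a + b from Nat.add_comm b a]

theorem stmt_15 (n₁ n₂ : ℕ) (hn₁ : 0 < n₁) (hn₂ : 0 < n₂) (r j : ℕ) (hj : 1 ≤ j) :
    Sfun (RatFunc.X : RatFunc ℚ) 2 (fun i => if i = 2 then n₂ else n₁) r j
      = ∑ l ∈ Finset.Icc 1 n₁,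
          (RatFunc.X : RatFunc ℚ) ^ (l ^ 2) *
            Polynomial.aeval (RatFunc.X : RatFunc ℚ) (qbinom (n₁ - 1) (l - 1)) *
            Polynomial.aeval (RatFunc.X : RatFunc ℚ) (qbinom n₂ l) *
            Sfun (RatFunc.X : RatFunc ℚ) 1 (fun _ => l) r (j - 1) := by
  simp only [QQ_def]
  rw [Sfun_two]
  have hz : ∀ k : ℕ, (RatFunc.X : RatFunc ℚ) ^ ((j:ℤ)*(k:ℤ)^2 - ((r:ℤ)+1)*(k:ℤ))
      = RatFunc.X ^ (k^2) * RatFunc.X ^ (((j-1:ℕ):ℤ)*(k:ℤ)^2 - ((r:ℤ)+1)*(k:ℤ)) := by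
    intro k
    rw [← zpow_natCast (RatFunc.X : RatFunc ℚ) (k^2), ← zpow_add₀ RatFunc.X_ne_zero]
    congr 1
    push_cast [hj]
    ring
  have step : ∀ l ∈ Finset.Icc 1 n₁,
      RatFunc.X ^ (l ^ 2) * QQ (qbinom (n₁ - 1) (l - 1)) * QQ (qbinom n₂ l) *
        Sfun RatFunc.X 1 (fun _ => l) r (j - 1)
      = ∑ k ∈ Finset.Icc 1 n₁,
          (QQ (qint (2*k)) * QQ (qint k)^(2*r) *
            RatFunc.X ^ (((j-1:ℕ):ℤ)*(k:ℤ)^2 - ((r:ℤ)+1)*(k:ℤ))) *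
          (RatFunc.X ^ (l^2) * QQ (qbinom (n₁-1) (l-1)) * QQ (qbinom n₂ l) *
            (QQ (qint l))⁻¹ * (QQ (qbinom (l+l) l))⁻¹ * QQ (qbinom (l+l) (l+k))) := by
    intro l hl
    rw [Finset.mem_Icc] at hl
    rw [Sfun_one]
    trans (∑ k ∈ Finset.Icc 1 l,
        (QQ (qint (2*k)) * QQ (qint k)^(2*r) *
          RatFunc.X ^ (((j-1:ℕ):ℤ)*(k:ℤ)^2 - ((r:ℤ)+1)*(k:ℤ))) *
        (RatFunc.X ^ (l^2) * QQ (qbinom (n₁-1) (l-1)) * QQ (qbinom n₂ l) *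
          (QQ (qint l))⁻¹ * (QQ (qbinom (l+l) l))⁻¹ * QQ (qbinom (l+l) (l+k))))
    · rw [Finset.mul_sum, Finset.mul_sum]
      apply Finset.sum_congr rfl
      intro k _
      ring
    · apply Finset.sum_subset
      · intro k hk
        rw [Finset.mem_Icc] at *
        omega
      · intro k hk1 hk2
        rw [Finset.mem_Icc] at hk1 hk2
        rw [QQ_qbinom_zero (show l+l < l+k by omega)]
        ring
  rw [Finset.sum_congr rfl step, Finset.sum_comm, Finset.mul_sum]
  apply Finset.sum_congr rfl
  intro k hk
  rw [Finset.mem_Icc] at hk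
  rw [← Finset.mul_sum, perk n₁ n₂ k hk.1 hk.2, hz k]
  ring
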